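/- In the processor sharing model, for a facet index I with I ≠ {1,…,N}, the perturbation vector Σ_v c_v (r_{I,v} − r_{∅,v}) v equals Σ_{i∈I} (f_i/f_{I^c}) CΛ(e_i − f), where f_{I^c} = Σ_{j∉I} f_j. In particular it is a nonnegative linear combination of the vectors d_i = CΛ(e_i − f)/‖CΛ(e_i − f)‖, i ∈ I. -/

import Mathlib

open Finset

/-- in the processor sharing model, for a facet index
I ≠ {1,…,N}, the perturbation vector Σ_v c_v (r_{I,v} − r_{∅,v}) v equals
Σ_{i∈I} (f_i/f_{I^c}) CΛ(e_i − f); in particular it is a nonnegative linear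
combination of the normalized directions d_i = CΛ(e_i − f)/‖CΛ(e_i − f)‖,
i ∈ I.  Here V = {±e_i}, r_{I,e_i} = a_i, r_{I,−e_i} = σ_i f_i/f_{I^c}·1{i∉I},
C = diag(c_i^−), Λ = diag(σ_i). -/
theorem processor_sharing_perturbation {N : ℕ}
    (a f σ cp cm : Fin N → ℝ)
    (ha : ∀ i, 0 < a i) (hf : ∀ i, 0 < f i) (hfs : ∑ i, f i = 1)
    (hσ : ∀ i, 0 < σ i) (hcp : ∀ i, 0 < cp i) (hcm : ∀ i, 0 < cm i)
    (I : Finset (Fin N)) (hI : I ≠ Finset.univ) :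
    letI e : Fin N → EuclideanSpace ℝ (Fin N) := fun i => EuclideanSpace.single i 1
    letI fIc : ℝ := ∑ j ∈ Iᶜ, f j
    letI CL : Fin N → EuclideanSpace ℝ (Fin N) :=
      fun i => WithLp.toLp 2 (fun j => cm j * σ j * ((if j = i then (1:ℝ) else 0) - f j) : Fin N → ℝ)
    ((∑ i, (cp i * (a i - a i)) • e i)
      + ∑ i, (cm i * ((if i ∈ I then 0 else σ i * f i / fIc) - σ i * f i)) • (-(e i))
      = ∑ i ∈ I, (f i / fIc) • CL i) ∧
    ∃ α : Fin N → ℝ, (∀ i, 0 ≤ α i) ∧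
      (∑ i, (cp i * (a i - a i)) • e i)
        + ∑ i, (cm i * ((if i ∈ I then 0 else σ i * f i / fIc) - σ i * f i)) • (-(e i))
        = ∑ i ∈ I, α i • (‖CL i‖⁻¹ • CL i) := by

  have hIc : Iᶜ.Nonempty := Finset.nonempty_iff_ne_empty.mpr fun h => hI (by simpa [Finset.compl_eq_empty_iff] using h)
  have hfIc : 0 < ∑ j ∈ Iᶜ, f j := Finset.sum_pos (fun j _ => hf j) hIc
  have hs : ∑ i ∈ I, f i = 1 - ∑ j ∈ Iᶜ, f j := by
    have h := Finset.sum_add_sum_compl I f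
    rw [hfs] at h; linarith
  have key : (∑ i : Fin N, (cp i * (a i - a i)) • EuclideanSpace.single i (1:ℝ))
      + ∑ i : Fin N, (cm i * ((if i ∈ I then 0 else σ i * f i / ∑ j ∈ Iᶜ, f j) - σ i * f i))
          • (-(EuclideanSpace.single i (1:ℝ)))
      = ∑ i ∈ I, (f i / ∑ j ∈ Iᶜ, f j) •
          (WithLp.toLp 2 (fun j => cm j * σ j * ((if j = i then (1:ℝ) else 0) - f j)) :
            EuclideanSpace ℝ (Fin N)) := by
    ext j
    have hL : ∀ (s : Finset (Fin N)) (g : Fin N → EuclideanSpace ℝ (Fin N)),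
        (∑ i ∈ s, g i) j = ∑ i ∈ s, g i j := fun s g => by rw [WithLp.ofLp_sum, Finset.sum_apply]
    show (∑ i : Fin N, (cp i * (a i - a i)) • EuclideanSpace.single i (1:ℝ)) j
        + (∑ i : Fin N, (cm i * ((if i ∈ I then 0 else σ i * f i / ∑ j ∈ Iᶜ, f j) - σ i * f i))
            • (-(EuclideanSpace.single i (1:ℝ)))) j
        = (∑ i ∈ I, (f i / ∑ j ∈ Iᶜ, f j) •
            (WithLp.toLp 2 (fun j => cm j * σ j * ((if j = i then (1:ℝ) else 0) - f j)) :
              EuclideanSpace ℝ (Fin N))) j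
    rw [hL, hL, hL]
    have hR : ∀ i : Fin N, ((f i / ∑ j ∈ Iᶜ, f j) •
        (WithLp.toLp 2 (fun j => cm j * σ j * ((if j = i then (1:ℝ) else 0) - f j)) :
          EuclideanSpace ℝ (Fin N))) j
        = (f i / ∑ j ∈ Iᶜ, f j) * (cm j * σ j * ((if j = i then (1:ℝ) else 0) - f j)) :=
      fun i => rfl
    simp only [hR]
    simp only [PiLp.smul_apply, PiLp.neg_apply, EuclideanSpace.single_apply,
      smul_eq_mul, sub_self, mul_zero, zero_mul, Finset.sum_const_zero, zero_add,
      mul_sub, mul_ite, mul_one, mul_neg, ite_self]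
    rw [Finset.sum_neg_distrib, Finset.sum_ite_eq, Finset.sum_sub_distrib,
      Finset.sum_ite_eq]
    have hT : ∑ i ∈ I, f i / (∑ j ∈ Iᶜ, f j) * (cm j * σ j * f j)
        = (1 - ∑ j ∈ Iᶜ, f j) / (∑ j ∈ Iᶜ, f j) * (cm j * σ j * f j) := by
      rw [← Finset.sum_mul, ← Finset.sum_div, hs]
    rw [hT]
    by_cases hj : j ∈ I
    · simp only [hj, if_pos, Finset.mem_univ, if_true]
      field_simp
      ring
    · simp only [hj, Finset.mem_univ, if_true, if_false]
      field_simp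
      ring
  refine ⟨key, ⟨fun i => (f i / ∑ j ∈ Iᶜ, f j) *
      @norm (EuclideanSpace ℝ (Fin N)) (PiLp.instNorm 2 fun _ => ℝ)
        (WithLp.toLp 2 (fun j => cm j * σ j * ((if j = i then (1:ℝ) else 0) - f j)) :
          EuclideanSpace ℝ (Fin N)), fun i => ?_, ?_⟩⟩
  · exact mul_nonneg (div_nonneg (hf i).le hfIc.le) (norm_nonneg _)
  · rw [key]
    refine Finset.sum_congr rfl fun i _ => ?_
    beta_reduce
    rw [smul_smul, mul_assoc]
    by_cases h0 : @norm (EuclideanSpace ℝ (Fin N)) (PiLp.instNorm 2 fun _ => ℝ)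
        (WithLp.toLp 2 (fun j => cm j * σ j * ((if j = i then (1:ℝ) else 0) - f j)) :
          EuclideanSpace ℝ (Fin N)) = 0
    · rw [h0]
      simp [norm_eq_zero.mp h0]
    · have h : ∀ x : ℝ, x ≠ 0 → ∀ (c : ℝ) (v : EuclideanSpace ℝ (Fin N)),
          c • v = (c * (x * x⁻¹)) • v := fun x hx c v => by
        rw [mul_inv_cancel₀ hx, mul_one]
      exact h _ h0 _ _
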